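/- Let G be a torsion-free nilpotent group, i.e. a nilpotent group in which the only element of finite order is the identity. Then roots in G are unique: for every integer n ≥ 1 and all x, y ∈ G, if xⁿ = yⁿ then x = y. Consequently, a torsion-free nilpotent group which is divisible (every element has a k-th root for every k ≥ 1) is uniquely divisible: for every y ∈ G and k ≥ 1 there is a unique x ∈ G with x^k = y. -/

import Mathlib

open Subgroup
open scoped Pointwise
open scoped commutatorElement

/-- In any group, the subgroup generated by one element together with the commutator
subgroup has its commutator subgroup inside `⁅[G,G], ⊤⁆`. -/
private lemma aux_comm_sub {G : Type*} [Group G] (x : G)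
    {a b : G} (ha : a ∈ (zpowers x) ⊔ Subgroup.lowerCentralSeries (⊤ : Subgroup G) 1)
    (hb : b ∈ (zpowers x) ⊔ Subgroup.lowerCentralSeries (⊤ : Subgroup G) 1) :
    ⁅a, b⁆ ∈ Subgroup.lowerCentralSeries (⊤ : Subgroup G) 2 := by
  -- work modulo Γ₂ := ⁅Γ₁, ⊤⁆
  set Γ₂ := Subgroup.lowerCentralSeries (⊤ : Subgroup G) 2 with hΓ₂
  let π : G →* G ⧸ Γ₂ := QuotientGroup.mk' Γ₂
  have hπsurj : Function.Surjective π := QuotientGroup.mk'_surjective Γ₂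
  -- image of Γ₁ is central
  have hcen : ∀ k : G, k ∈ Subgroup.lowerCentralSeries (⊤ : Subgroup G) 1 → π k ∈ Subgroup.center (G ⧸ Γ₂) := by
    intro k hk
    rw [Subgroup.mem_center_iff]
    intro q
    obtain ⟨g, rfl⟩ := hπsurj q
    have : ⁅k, g⁆ ∈ Γ₂ := commutator_mem_commutator hk (mem_top g)
    have h1 : π ⁅k, g⁆ = 1 := (QuotientGroup.eq_one_iff _).mpr this
    rw [map_commutatorElement] at h1
    have := commutatorElement_eq_one_iff_commute.mp h1
    exact this.symm.eq
  -- elements of the sup decompose as x^i * k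
  have hdec : ∀ c : G, c ∈ (zpowers x) ⊔ Subgroup.lowerCentralSeries (⊤ : Subgroup G) 1 →
      ∃ i : ℤ, ∃ k ∈ Subgroup.lowerCentralSeries (⊤ : Subgroup G) 1, c = x ^ i * k := by
    intro c hc
    have : c ∈ ((zpowers x : Subgroup G) : Set G) * (Subgroup.lowerCentralSeries (⊤ : Subgroup G) 1 : Set G) := by
      rw [← Subgroup.mul_normal]; exact_mod_cast hc
    obtain ⟨u, hu, k, hk, rfl⟩ := this
    obtain ⟨i, rfl⟩ := Subgroup.mem_zpowers_iff.mp hu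
    exact ⟨i, k, hk, rfl⟩
  obtain ⟨i, k, hk, rfl⟩ := hdec a ha
  obtain ⟨j, k', hk', rfl⟩ := hdec b hb
  -- show the commutator dies in the quotient
  have : π ⁅x ^ i * k, x ^ j * k'⁆ = 1 := by
    rw [map_commutatorElement, commutatorElement_eq_one_iff_commute]
    have hk1 : Commute (π k) (π (x ^ j * k')) :=
      (Subgroup.mem_center_iff.mp (hcen k hk) _).symm
    have hk2 : Commute (π (x ^ i)) (π k') :=
      Subgroup.mem_center_iff.mp (hcen k' hk') _
    have hxx : Commute (π (x ^ i)) (π (x ^ j)) := by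
      rw [map_zpow, map_zpow]
      exact (Commute.zpow_zpow (Commute.refl (π x)) i j)
    have hx2 : Commute (π (x ^ i)) (π (x ^ j * k')) := by
      rw [map_mul]; exact hxx.mul_right hk2
    rw [map_mul]
    exact hx2.mul_left hk1
  exact (QuotientGroup.eq_one_iff _).mp this


private lemma aux_H_lcs {G : Type*} [Group G] (x : G) :
    ∀ i : ℕ, Subgroup.map ((zpowers x) ⊔ Subgroup.lowerCentralSeries (⊤ : Subgroup G) 1).subtype
      (Subgroup.lowerCentralSeries (⊤ : Subgroup ↥((zpowers x) ⊔ Subgroup.lowerCentralSeries (⊤ : Subgroup G) 1)) (i + 1))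
      ≤ Subgroup.lowerCentralSeries (⊤ : Subgroup G) (i + 2) := by
  set H : Subgroup G := (zpowers x) ⊔ Subgroup.lowerCentralSeries (⊤ : Subgroup G) 1 with hH
  intro i
  induction i with
  | zero =>
      have h1 : Subgroup.lowerCentralSeries (⊤ : Subgroup ↥H) 1 = ⁅(⊤ : Subgroup ↥H), ⊤⁆ := by
        rw [Subgroup.top_lowerCentralSeries_one]; rfl
      rw [h1, Subgroup.map_commutator, ← MonoidHom.range_eq_map, Subgroup.range_subtype]
      rw [Subgroup.commutator_le]
      intro a ha b hb
      exact aux_comm_sub x ha hb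
  | succ i ih =>
      show Subgroup.map H.subtype ⁅Subgroup.lowerCentralSeries (⊤ : Subgroup ↥H) (i + 1), ⊤⁆ ≤
        ⁅Subgroup.lowerCentralSeries (⊤ : Subgroup G) (i + 2), ⊤⁆
      rw [Subgroup.map_commutator]
      exact Subgroup.commutator_mono ih le_top

private lemma aux_main : ∀ (c : ℕ) (G : Type u) [Group G],
    Subgroup.lowerCentralSeries (⊤ : Subgroup G) c = ⊥ →
    (∀ x : G, ∀ n : ℕ, 1 ≤ n → x ^ n = 1 → x = 1) →
    ∀ n : ℕ, 1 ≤ n → ∀ x y : G, x ^ n = y ^ n → x = y := by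
  intro c
  induction c with
  | zero =>
      intro G _ hbot _ n _ x y _
      have hx : x ∈ Subgroup.lowerCentralSeries (⊤ : Subgroup G) 0 := by rw [Subgroup.lowerCentralSeries_zero]; trivial
      have hy : y ∈ Subgroup.lowerCentralSeries (⊤ : Subgroup G) 0 := by rw [Subgroup.lowerCentralSeries_zero]; trivial
      rw [hbot] at hx hy
      rw [Subgroup.mem_bot] at hx hy
      rw [hx, hy]
  | succ c ih =>
      intro G _ hbot htf n hn x y hxy
      -- first establish that x and y commute
      have hcomm : Commute x y := by
        match c, hbot, ih with
        | 0, hbot, _ =>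
            have : ⁅x, y⁆ ∈ Subgroup.lowerCentralSeries (⊤ : Subgroup G) 1 :=
              Subgroup.commutator_mem_commutator (Subgroup.mem_top x) (Subgroup.mem_top y)
            rw [hbot, Subgroup.mem_bot] at this
            exact commutatorElement_eq_one_iff_commute.mp this
        | c' + 1, hbot, ih =>
            set H : Subgroup G := (zpowers x) ⊔ Subgroup.lowerCentralSeries (⊤ : Subgroup G) 1 with hH
            have hxH : x ∈ H := le_sup_left (α := Subgroup G) (Subgroup.mem_zpowers x)
            have hwH : y * x * y⁻¹ ∈ H := by
              have h1 : ⁅y, x⁆ ∈ Subgroup.lowerCentralSeries (⊤ : Subgroup G) 1 :=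
                Subgroup.commutator_mem_commutator (Subgroup.mem_top y) (Subgroup.mem_top x)
            
              have : y * x * y⁻¹ = ⁅y, x⁆ * x := by group
              rw [this]
              exact mul_mem (le_sup_right (α := Subgroup G) h1) hxH
            -- H has smaller class
            have hHbot : Subgroup.lowerCentralSeries (⊤ : Subgroup ↥H) (c' + 1) = ⊥ := by
              have h2 := aux_H_lcs x (G := G) c'
              rw [hbot] at h2
              rw [eq_bot_iff]
              intro a ha
              have : H.subtype a ∈ (⊥ : Subgroup G) :=
                h2 (Subgroup.mem_map_of_mem _ ha)
              rw [Subgroup.mem_bot] at this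
              rw [Subgroup.mem_bot]
              exact Subtype.ext this
            -- H is torsion-free
            have hHtf : ∀ z : ↥H, ∀ m : ℕ, 1 ≤ m → z ^ m = 1 → z = 1 := by
              intro z m hm hz
              ext
              have : ((z : G)) ^ m = 1 := by
                have := congrArg (Subtype.val) hz
                simpa using this
              simpa using htf z m hm this
            -- apply IH inside H to w and x
            have hwn : (y * x * y⁻¹) ^ n = x ^ n := by
              rw [conj_pow, hxy, ← conj_pow]
              group
            have := ih ↥H hHbot hHtf n hn ⟨y * x * y⁻¹, hwH⟩ ⟨x, hxH⟩
              (by ext; simpa using hwn)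
            have hwx : y * x * y⁻¹ = x := congrArg Subtype.val this
            have : y * x = x * y := by
              calc y * x = (y * x * y⁻¹) * y := by group
              _ = x * y := by rw [hwx]
            exact this.symm
      -- now finish using torsion-freeness
      have h1 : (x⁻¹ * y) ^ n = 1 := by
        rw [hcomm.inv_left.mul_pow, inv_pow, hxy]
        group
      have := htf (x⁻¹ * y) n hn h1
      rw [inv_mul_eq_one] at this
      exact this

/-- Let `G` be a torsion-free nilpotent group.  Then roots in `G` are
unique: for every `n ≥ 1`, `xⁿ = yⁿ` implies `x = y`.  Consequently, if `G` is moreover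
divisible (every element has a `k`-th root for every `k ≥ 1`), then it is uniquely
divisible: for every `y ∈ G` and `k ≥ 1` there is a unique `x ∈ G` with `x^k = y`. -/
theorem torsionFree_nilpotent_unique_roots
    (G : Type*) [Group G] [Group.IsNilpotent G]
    (htf : ∀ x : G, ∀ n : ℕ, 1 ≤ n → x ^ n = 1 → x = 1) :
    (∀ n : ℕ, 1 ≤ n → ∀ x y : G, x ^ n = y ^ n → x = y) ∧
    ((∀ y : G, ∀ k : ℕ, 1 ≤ k → ∃ x : G, x ^ k = y) →
      ∀ y : G, ∀ k : ℕ, 1 ≤ k → ∃! x : G, x ^ k = y) := by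
  obtain ⟨c, hc⟩ := Subgroup.nilpotent_iff_lowerCentralSeries.mp ‹Group.IsNilpotent G›
  have huniq : ∀ n : ℕ, 1 ≤ n → ∀ x y : G, x ^ n = y ^ n → x = y :=
    aux_main c G hc htf
  refine ⟨huniq, fun hdiv y k hk => ?_⟩
  obtain ⟨x, hx⟩ := hdiv y k hk
  exact ⟨x, hx, fun z hz => huniq k hk z x (hz.trans hx.symm)⟩
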